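/- For the limiting Hamiltonian system dH₁/dt = H₂H₃ - h₃a₂, dH₂/dt = -H₁H₃ + h₃a₁, dH₃/dt = h₁a₂ - h₂a₁, dh₁/dt = h₂H₃ - kH₃a₂, dh₂/dt = -h₁H₃ + kH₃a₁, dh₃/dt = k(H₁a₂ - H₂a₁), setting w = h₁ + ih₂ and a = a₁ + ia₂, one has d(w - ka)/dt = -iH₃(w - ka), and hence |w - ka|² is a constant of motion. -/

import Mathlib

open Complex

theorem limiting_case_integral_of_motion (k a₁ a₂ : ℝ)
    (h₁ h₂ h₃ H₁ H₂ H₃ : ℝ → ℝ)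
    (e1 : ∀ t, HasDerivAt H₁ (H₂ t * H₃ t - h₃ t * a₂) t)
    (e2 : ∀ t, HasDerivAt H₂ (-(H₁ t * H₃ t) + h₃ t * a₁) t)
    (e3 : ∀ t, HasDerivAt H₃ (h₁ t * a₂ - h₂ t * a₁) t)
    (e4 : ∀ t, HasDerivAt h₁ (h₂ t * H₃ t - k * H₃ t * a₂) t)
    (e5 : ∀ t, HasDerivAt h₂ (-(h₁ t * H₃ t) + k * H₃ t * a₁) t)
    (e6 : ∀ t, HasDerivAt h₃ (k * (H₁ t * a₂ - H₂ t * a₁)) t)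
    (w : ℝ → ℂ) (a : ℂ)
    (hw : ∀ t, w t = (h₁ t : ℂ) + Complex.I * (h₂ t : ℂ))
    (ha : a = (a₁ : ℂ) + Complex.I * (a₂ : ℂ)) :
    (∀ t, HasDerivAt (fun s => w s - (k : ℂ) * a)
        (-Complex.I * (H₃ t : ℂ) * (w t - (k : ℂ) * a)) t)
    ∧ ∀ t₁ t₂ : ℝ, ‖w t₁ - (k : ℂ) * a‖ ^ 2
        = ‖w t₂ - (k : ℂ) * a‖ ^ 2 := by
  have hderiv : ∀ t, HasDerivAt (fun s => w s - (k : ℂ) * a)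
      (-Complex.I * (H₃ t : ℂ) * (w t - (k : ℂ) * a)) t := by
    intro t
    have hd1 : HasDerivAt (fun s => (h₁ s : ℂ))
        ((h₂ t * H₃ t - k * H₃ t * a₂ : ℝ) : ℂ) t :=
      (Complex.ofRealCLM.hasDerivAt.scomp t (e4 t)).congr_deriv (by simp)
    have hd2 : HasDerivAt (fun s => (h₂ s : ℂ))
        ((-(h₁ t * H₃ t) + k * H₃ t * a₁ : ℝ) : ℂ) t :=
      (Complex.ofRealCLM.hasDerivAt.scomp t (e5 t)).congr_deriv (by simp)
    have hdw : HasDerivAt (fun s => w s - (k : ℂ) * a)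
        (((h₂ t * H₃ t - k * H₃ t * a₂ : ℝ) : ℂ)
          + Complex.I * ((-(h₁ t * H₃ t) + k * H₃ t * a₁ : ℝ) : ℂ)) t := by
      have := ((hd1.add ((hd2.const_mul Complex.I))).sub_const ((k : ℂ) * a))
      refine this.congr_of_eventuallyEq ?_
      filter_upwards with s
      rw [hw s]
      rfl
    refine hdw.congr_deriv ?_
    rw [hw t, ha]
    push_cast
    ring_nf
    simp [Complex.I_sq]
    ring
  refine ⟨hderiv, ?_⟩
  have key : ∀ t, HasDerivAt (fun s => Complex.normSq (w s - (k : ℂ) * a)) 0 t := by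
    intro t
    set f : ℝ → ℂ := fun s => w s - (k : ℂ) * a with hf
    set f' : ℂ := -Complex.I * (H₃ t : ℂ) * (w t - (k : ℂ) * a) with hf'
    have hre : HasDerivAt (fun s => (f s).re) f'.re t :=
      Complex.reCLM.hasFDerivAt.comp_hasDerivAt t (hderiv t)
    have him : HasDerivAt (fun s => (f s).im) f'.im t :=
      Complex.imCLM.hasFDerivAt.comp_hasDerivAt t (hderiv t)
    have : HasDerivAt (fun s => (f s).re * (f s).re + (f s).im * (f s).im)
        (f'.re * (f t).re + (f t).re * f'.re + (f'.im * (f t).im + (f t).im * f'.im)) t :=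
      (hre.mul hre).add (him.mul him)
    refine (this.congr_deriv ?_).congr_of_eventuallyEq ?_
    · simp only [hf', Complex.mul_re, Complex.mul_im, Complex.neg_re, Complex.neg_im,
        Complex.I_re, Complex.I_im, Complex.ofReal_re, Complex.ofReal_im]
      ring
    · filter_upwards with s
      simp [hf, Complex.normSq_apply]
  have hconst : ∀ t₁ t₂ : ℝ, Complex.normSq (w t₁ - (k : ℂ) * a)
      = Complex.normSq (w t₂ - (k : ℂ) * a) := by
    have := is_const_of_deriv_eq_zero (f := fun s => Complex.normSq (w s - (k : ℂ) * a))
      (fun t => (key t).differentiableAt) (fun t => (key t).deriv)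
    intro t₁ t₂; exact this t₁ t₂
  intro t₁ t₂
  rw [Complex.sq_norm, Complex.sq_norm, hconst t₁ t₂]
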